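/- Let f be convex and differentiable on a compact convex set P and let x ∈ P with x = Σ_s α_s s for weights α over a finite set of points. If w⁺(α) = 0 and w⁻(α) = 0, then x is a minimizer of f over P; conversely, if x minimizes f over P and each point of supp(α) lies in P, then w⁺(α) = 0 and w⁻(α) = 0. -/

import Mathlib

open RealInnerProductSpace

lemma line_deriv {n : ℕ} (f : EuclideanSpace ℝ (Fin n) → ℝ)
    (x y g : EuclideanSpace ℝ (Fin n)) (hg : HasGradientAt f g x) :
    HasDerivAt (fun t : ℝ => f (x + t • (y - x))) ⟪g, y - x⟫ 0 := by
  have h1 : HasDerivAt (fun t : ℝ => x + t • (y - x)) (y - x) 0 := by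
    simpa using ((hasDerivAt_id (0:ℝ)).smul_const (y - x)).const_add x
  have h2 := HasFDerivAt.comp_hasDerivAt (x := (0:ℝ)) (f := fun t : ℝ => x + t • (y - x)) (by simpa using hg.hasFDerivAt) h1
  simp at h2
  exact h2

lemma slope_tendsto {n : ℕ} (f : EuclideanSpace ℝ (Fin n) → ℝ)
    (x y g : EuclideanSpace ℝ (Fin n)) (hg : HasGradientAt f g x) :
    Filter.Tendsto (fun t : ℝ => (f (x + t • (y - x)) - f x) / t)
      (nhdsWithin 0 (Set.Ioi 0)) (nhds ⟪g, y - x⟫) := by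
  have h := (hasDerivAt_iff_tendsto_slope.mp (line_deriv f x y g hg))
  have h2 := h.mono_left (nhdsWithin_mono 0 (by intro t ht; exact ne_of_gt ht))
  refine h2.congr (fun t => ?_)
  simp [slope_def_field, div_eq_inv_mul]

-- gradient inequality for convex f
lemma grad_ineq {n : ℕ} {P : Set (EuclideanSpace ℝ (Fin n))}
    {f : EuclideanSpace ℝ (Fin n) → ℝ} (hf : ConvexOn ℝ P f)
    {x y g : EuclideanSpace ℝ (Fin n)} (hx : x ∈ P) (hy : y ∈ P)
    (hg : HasGradientAt f g x) : ⟪g, y - x⟫ ≤ f y - f x := by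
  refine le_of_tendsto (slope_tendsto f x y g hg) ?_
  filter_upwards [Ioo_mem_nhdsGT_of_mem (Set.mem_Ico.mpr ⟨le_refl (0:ℝ), one_pos⟩)]
    with t ht
  obtain ⟨ht0, ht1⟩ := ht
  have hcomb : x + t • (y - x) = (1 - t) • x + t • y := by
    simp [smul_sub, sub_smul]; abel
  have h3 := hf.2 hx hy (by linarith : (0:ℝ) ≤ 1 - t) (le_of_lt ht0) (by ring)
  simp only [smul_eq_mul] at h3
  rw [hcomb]
  rw [div_le_iff₀ ht0]
  calc f ((1 - t) • x + t • y) - f x ≤ (1 - t) * f x + t * f y - f x := by linarith [h3]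
    _ = (f y - f x) * t := by ring

-- first-order necessary condition
lemma first_order {n : ℕ} {P : Set (EuclideanSpace ℝ (Fin n))}
    {f : EuclideanSpace ℝ (Fin n) → ℝ} (hP : Convex ℝ P)
    {x y g : EuclideanSpace ℝ (Fin n)} (hx : x ∈ P) (hy : y ∈ P)
    (hg : HasGradientAt f g x) (hmin : ∀ z ∈ P, f x ≤ f z) :
    0 ≤ ⟪g, y - x⟫ := by
  refine ge_of_tendsto (slope_tendsto f x y g hg) ?_
  filter_upwards [Ioo_mem_nhdsGT_of_mem (Set.mem_Ico.mpr ⟨le_refl (0:ℝ), one_pos⟩)]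
    with t ht
  obtain ⟨ht0, ht1⟩ := ht
  have hcomb : x + t • (y - x) = (1 - t) • x + t • y := by
    simp [smul_sub, sub_smul]; abel
  have hmem : x + t • (y - x) ∈ P := by
    rw [hcomb]; exact hP hx hy (by linarith) (le_of_lt ht0) (by ring)
  have h4 := hmin _ hmem
  apply div_nonneg (by linarith) (le_of_lt ht0)

theorem optimality_iff_gaps_zero {n : ℕ}
    (P : Set (EuclideanSpace ℝ (Fin n))) (f : EuclideanSpace ℝ (Fin n) → ℝ)
    (hP : Convex ℝ P) (hPc : IsCompact P) (hf : ConvexOn ℝ P f)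
    (A : Finset (EuclideanSpace ℝ (Fin n))) (hA : ∀ s ∈ A, s ∈ P)
    (α : EuclideanSpace ℝ (Fin n) → ℝ) (hα0 : ∀ s ∈ A, 0 ≤ α s)
    (hα1 : ∑ s ∈ A, α s = 1)
    (x : EuclideanSpace ℝ (Fin n)) (hx : x = ∑ s ∈ A, α s • s) (hxP : x ∈ P)
    (g : EuclideanSpace ℝ (Fin n)) (hg : HasGradientAt f g x)
    (wp wm : ℝ)
    (hwp : IsGreatest {r | ∃ s ∈ P, r = ⟪g, x - s⟫} wp)
    (hwm : IsGreatest {r | ∃ u ∈ A.filter (fun s => 0 < α s),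
        ∃ v ∈ A.filter (fun s => 0 < α s), r = ⟪g, v - u⟫} wm) :
    ((wp = 0 ∧ wm = 0) → ∀ y ∈ P, f x ≤ f y) ∧
    ((∀ y ∈ P, f x ≤ f y) → (wp = 0 ∧ wm = 0)) := by
  constructor
  · rintro ⟨hwp0, -⟩ y hy
    have h1 : ⟪g, x - y⟫ ≤ wp := hwp.2 ⟨y, hy, rfl⟩
    rw [hwp0] at h1
    have h2 : 0 ≤ ⟪g, y - x⟫ := by
      have : ⟪g, x - y⟫ = -⟪g, y - x⟫ := by
        rw [← inner_neg_right]; congr 1; abel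
      linarith [this ▸ h1]
    linarith [grad_ineq hf hxP hy hg]
  · intro hmin
    -- wp = 0
    have hwp0 : wp = 0 := by
      apply le_antisymm
      · obtain ⟨s, hs, hws⟩ := hwp.1
        have := first_order hP hxP hs hg hmin
        have heq : ⟪g, x - s⟫ = -⟪g, s - x⟫ := by
          rw [← inner_neg_right]; congr 1; abel
        rw [hws, heq]; linarith
      · have : (0:ℝ) ∈ {r | ∃ s ∈ P, r = ⟪g, x - s⟫} := ⟨x, hxP, by simp⟩
        exact hwp.2 this
    refine ⟨hwp0, ?_⟩
    -- each support point u satisfies ⟪g, u - x⟫ = 0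
    have hsum : ∑ s ∈ A, α s * ⟪g, s - x⟫ = 0 := by
      have : ∀ s ∈ A, α s * ⟪g, s - x⟫ = ⟪g, α s • s⟫ - α s * ⟪g, x⟫ := by
        intro s _
        rw [inner_smul_right, inner_sub_right]; ring
      rw [Finset.sum_congr rfl this, Finset.sum_sub_distrib, ← inner_sum,
        ← Finset.sum_mul, hα1, ← hx]
      ring
    have hzero : ∀ s ∈ A, 0 < α s → ⟪g, s - x⟫ = 0 := by
      intro s hs hαs
      have hnn : ∀ s ∈ A, 0 ≤ α s * ⟪g, s - x⟫ := fun s hs =>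
        mul_nonneg (hα0 s hs) (first_order hP hxP (hA s hs) hg hmin)
      have := (Finset.sum_eq_zero_iff_of_nonneg hnn).mp hsum s hs
      rcases mul_eq_zero.mp this with h | h
      · exact absurd h (ne_of_gt hαs)
      · exact h
    -- wm = 0
    apply le_antisymm
    · obtain ⟨u, hu, v, hv, hwv⟩ := hwm.1
      simp only [Finset.mem_filter] at hu hv
      have h1 := hzero u hu.1 hu.2
      have h2 := hzero v hv.1 hv.2
      have : ⟪g, v - u⟫ = ⟪g, v - x⟫ - ⟪g, u - x⟫ := by
        rw [← inner_sub_right]; congr 1; abel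
      rw [hwv, this, h1, h2]; simp
    · obtain ⟨s, hsA, hαs⟩ : ∃ s ∈ A, 0 < α s := by
        by_contra h
        push_neg at h
        have : ∑ s ∈ A, α s = 0 :=
          Finset.sum_eq_zero fun s hs => le_antisymm (h s hs) (hα0 s hs)
        rw [hα1] at this; norm_num at this
      have hmem : s ∈ A.filter (fun s => 0 < α s) := Finset.mem_filter.mpr ⟨hsA, hαs⟩
      exact hwm.2 ⟨s, hmem, s, hmem, by simp⟩
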